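/- Let k be a field of characteristic ≠ 2, A_n the Hopf algebra generated by g, x_1,…,x_n with g² = 1, x_i² = 0, gx_i = −x_ig, x_ix_j = −x_jx_i, Δ(g) = g⊗g, Δ(x_i) = x_i⊗g + 1⊗x_i, and B_n = A_n^cop its co-opposite with generators h, y_1,…,y_n. Then the unique Hopf pairing σ: A_n × B_n → k with σ(g,h) = −1, σ(g,y_j) = σ(x_i,h) = 0, σ(x_i,y_j) = δ_{ij} satisfies σ(g^k x_S, h^l y_T) = (−1)^{kl} δ_{S,T} for all k,l ∈ {0,1} and subsets S, T ⊆ {1,…,n} (where x_S, y_S denote ordered products over S), and consequently σ is non-degenerate. -/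

import Mathlib

open TensorProduct Coalgebra

/-- A Hopf pairing between two Hopf algebras `A` and `B` over a field `k`: a bilinear map
`σ : A × B → k` satisfying `σ(a, bb') = σ(a₍₁₎, b) σ(a₍₂₎, b')`,
`σ(aa', b) = σ(a, b₍₂₎) σ(a', b₍₁₎)`, `σ(a, 1) = ε(a)` and `σ(1, b) = ε(b)`. -/
structure HopfPairing (k A B : Type) [Field k] [Ring A] [HopfAlgebra k A]
    [Ring B] [HopfAlgebra k B] where
  σ : A →ₗ[k] B →ₗ[k] k
  pair_mul_right : ∀ (a : A) (b b' : B),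
    σ a (b * b') = LinearMap.mul' k k (TensorProduct.map (σ.flip b) (σ.flip b') (comul (R := k) a))
  pair_mul_left : ∀ (a a' : A) (b : B),
    σ (a * a') b = LinearMap.mul' k k (TensorProduct.map (σ a') (σ a) (comul (R := k) b))
  pair_one_right : ∀ a : A, σ a 1 = counit (R := k) a
  pair_one_left : ∀ b : B, σ 1 b = counit (R := k) b

section CapsP
variable {k A B : Type} [Field k] [Ring A] [HopfAlgebra k A] [Ring B] [HopfAlgebra k B]

noncomputable def capFunR (σ : A →ₗ[k] B →ₗ[k] k) (z : B) : A ⊗[k] A →ₗ[k] A :=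
  TensorProduct.lift (((LinearMap.lsmul k A).comp (σ.flip z)).flip)

noncomputable def capR (σ : A →ₗ[k] B →ₗ[k] k) (z : B) : A →ₗ[k] A :=
  (capFunR σ z) ∘ₗ Coalgebra.comul

@[simp] lemma capFunR_tmul (σ : A →ₗ[k] B →ₗ[k] k) (z : B) (a₁ a₂ : A) :
    capFunR σ z (a₁ ⊗ₜ[k] a₂) = σ a₂ z • a₁ := by
  simp [capFunR]

lemma capR_apply (σ : A →ₗ[k] B →ₗ[k] k) (z : B) (a : A) :
    capR σ z a = capFunR σ z (Coalgebra.comul a) := rfl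

noncomputable def capFunL (σ : A →ₗ[k] B →ₗ[k] k) (w : A) : B ⊗[k] B →ₗ[k] B :=
  TensorProduct.lift ((LinearMap.lsmul k B).comp (σ w))

noncomputable def capL (σ : A →ₗ[k] B →ₗ[k] k) (w : A) : B →ₗ[k] B :=
  (capFunL σ w) ∘ₗ Coalgebra.comul

@[simp] lemma capFunL_tmul (σ : A →ₗ[k] B →ₗ[k] k) (w : A) (b₁ b₂ : B) :
    capFunL σ w (b₁ ⊗ₜ[k] b₂) = σ w b₁ • b₂ := by
  simp [capFunL]

lemma capL_apply (σ : A →ₗ[k] B →ₗ[k] k) (w : A) (b : B) :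
    capL σ w b = capFunL σ w (Coalgebra.comul b) := rfl

lemma pair_capR (p : HopfPairing k A B) (a : A) (b z : B) :
    p.σ a (b * z) = p.σ (capR p.σ z a) b := by
  rw [p.pair_mul_right, capR_apply]
  induction (Coalgebra.comul (R := k) a) using TensorProduct.induction_on with
  | zero => simp
  | tmul a₁ a₂ =>
      simp only [TensorProduct.map_tmul, LinearMap.mul'_apply, capFunR_tmul, map_smul,
        LinearMap.smul_apply, smul_eq_mul, LinearMap.flip_apply]
      ring
  | add t₁ t₂ h₁ h₂ => simp only [map_add, LinearMap.add_apply, h₁, h₂]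

lemma pair_capL (p : HopfPairing k A B) (a w : A) (b : B) :
    p.σ (a * w) b = p.σ a (capL p.σ w b) := by
  rw [p.pair_mul_left, capL_apply]
  induction (Coalgebra.comul (R := k) b) using TensorProduct.induction_on with
  | zero => simp
  | tmul b₁ b₂ =>
      simp only [TensorProduct.map_tmul, LinearMap.mul'_apply, capFunL_tmul, map_smul,
        smul_eq_mul]
  | add t₁ t₂ h₁ h₂ => simp only [map_add, LinearMap.add_apply, h₁, h₂]

end CapsP

section ECaps
variable {k A B : Type} [Field k] [Ring A] [HopfAlgebra k A] [Ring B] [HopfAlgebra k B]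

noncomputable def ecapA (k A : Type) [Field k] [Ring A] [HopfAlgebra k A] : A ⊗[k] A →ₗ[k] A :=
  TensorProduct.lift (((LinearMap.lsmul k A).comp (Coalgebra.counit (R := k))).flip)

@[simp] lemma ecapA_tmul (a₁ a₂ : A) :
    ecapA k A (a₁ ⊗ₜ[k] a₂) = Coalgebra.counit (R := k) a₂ • a₁ := by
  simp [ecapA]

lemma ecapA_comul (a : A) : ecapA k A (Coalgebra.comul (R := k) a) = a := by
  have h2 : ∀ t : A ⊗[k] A,
      ecapA k A t = TensorProduct.rid k A ((Coalgebra.counit (R := k)).lTensor A t) := by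
    intro t
    induction t using TensorProduct.induction_on with
    | zero => simp
    | tmul a₁ a₂ => simp [TensorProduct.rid_tmul]
    | add t₁ t₂ h₁ h₂ => simp [map_add, h₁, h₂]
  rw [h2, Coalgebra.lTensor_counit_comul]
  simp

noncomputable def ecapB (k B : Type) [Field k] [Ring B] [HopfAlgebra k B] : B ⊗[k] B →ₗ[k] B :=
  TensorProduct.lift ((LinearMap.lsmul k B).comp (Coalgebra.counit (R := k)))

@[simp] lemma ecapB_tmul (b₁ b₂ : B) :
    ecapB k B (b₁ ⊗ₜ[k] b₂) = Coalgebra.counit (R := k) b₁ • b₂ := by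
  simp [ecapB]

lemma ecapB_comul (b : B) : ecapB k B (Coalgebra.comul (R := k) b) = b := by
  have h2 : ∀ t : B ⊗[k] B,
      ecapB k B t = TensorProduct.lid k B ((Coalgebra.counit (R := k)).rTensor B t) := by
    intro t
    induction t using TensorProduct.induction_on with
    | zero => simp
    | tmul b₁ b₂ => simp [TensorProduct.lid_tmul]
    | add t₁ t₂ h₁ h₂ => simp [map_add, h₁, h₂]
  rw [h2, Coalgebra.rTensor_counit_comul]
  simp

end ECaps

lemma sort_eq_erase_append {α : Type*} [LinearOrder α] [DecidableEq α] {S : Finset α} {j : α}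
    (hj : j ∈ S) (hmax : ∀ i ∈ S, i ≤ j) :
    S.sort (· ≤ ·) = (S.erase j).sort (· ≤ ·) ++ [j] := by
  refine List.Perm.eq_of_pairwise' (Finset.pairwise_sort _ _) ?_ ?_
  · refine List.pairwise_append.mpr ⟨Finset.pairwise_sort _ _, List.pairwise_singleton _ _, ?_⟩
    intro a ha b hb
    rw [List.mem_singleton] at hb
    subst hb
    exact hmax a (Finset.mem_of_mem_erase ((Finset.mem_sort _).mp ha))
  · rw [← Multiset.coe_eq_coe]
    show (↑(S.sort (· ≤ ·)) : Multiset α) = ↑((S.erase j).sort (· ≤ ·) ++ [j])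
    rw [← Multiset.coe_add, Finset.sort_eq, Finset.sort_eq, add_comm,
      Multiset.coe_singleton, Multiset.singleton_add, Finset.erase_val,
      Multiset.cons_erase (Finset.mem_def.mp hj)]


/-- For the Hopf algebra `A_n` (generators `g`, `x i`) and its co-opposite `B_n = A_n^cop`
(generators `h`, `y i`), the Hopf pairing `σ` with `σ(g,h) = -1`, `σ(g,y_j) = σ(x_i,h) = 0`,
`σ(x_i,y_j) = δ_{ij}` satisfies `σ(g^k x_S, h^l y_T) = (-1)^{kl} δ_{S,T}`, and consequently
`σ` is non-degenerate. -/
theorem An_pairing_basis (k : Type) [Field k] (htwo : (2 : k) ≠ 0) (n : ℕ)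
    (A B : Type) [Ring A] [HopfAlgebra k A] [Ring B] [HopfAlgebra k B]
    (g : A) (x : Fin n → A) (h : B) (y : Fin n → B)
    -- relations in A_n
    (hg2 : g * g = 1) (hx2 : ∀ i, x i * x i = 0)
    (hgx : ∀ i, g * x i = -(x i * g)) (hxx : ∀ i j, x i * x j = -(x j * x i))
    (hcg : Coalgebra.comul (R := k) g = g ⊗ₜ[k] g)
    (hcx : ∀ i, Coalgebra.comul (R := k) (x i) = x i ⊗ₜ[k] g + (1 : A) ⊗ₜ[k] x i)
    (heg : Coalgebra.counit (R := k) g = 1) (hex : ∀ i, Coalgebra.counit (R := k) (x i) = 0)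
    -- relations in B_n = A_n^cop
    (hh2 : h * h = 1) (hy2 : ∀ i, y i * y i = 0)
    (hhy : ∀ i, h * y i = -(y i * h)) (hyy : ∀ i j, y i * y j = -(y j * y i))
    (hch : Coalgebra.comul (R := k) h = h ⊗ₜ[k] h)
    (hcy : ∀ i, Coalgebra.comul (R := k) (y i) = y i ⊗ₜ[k] (1 : B) + h ⊗ₜ[k] y i)
    (heh : Coalgebra.counit (R := k) h = 1) (hey : ∀ i, Coalgebra.counit (R := k) (y i) = 0)
    -- the Hopf pairing and its values on generators
    (p : HopfPairing k A B)
    (hσgh : p.σ g h = -1) (hσgy : ∀ j, p.σ g (y j) = 0) (hσxh : ∀ i, p.σ (x i) h = 0)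
    (hσxy : ∀ i j, p.σ (x i) (y j) = if i = j then 1 else 0)
    -- the monomials g^k x_S and h^l y_T form bases
    (bA : Module.Basis (Bool × Finset (Fin n)) k A)
    (hbA : ∀ q : Bool × Finset (Fin n),
      bA q = (if q.1 then g else 1) * ((q.2.sort (· ≤ ·)).map x).prod)
    (bB : Module.Basis (Bool × Finset (Fin n)) k B)
    (hbB : ∀ q : Bool × Finset (Fin n),
      bB q = (if q.1 then h else 1) * ((q.2.sort (· ≤ ·)).map y).prod) :
    (∀ (kk ll : Bool) (S T : Finset (Fin n)),
      p.σ ((if kk then g else 1) * ((S.sort (· ≤ ·)).map x).prod)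
          ((if ll then h else 1) * ((T.sort (· ≤ ·)).map y).prod)
        = if S = T then (if kk ∧ ll then (-1 : k) else 1) else 0) ∧
    (∀ a : A, (∀ b : B, p.σ a b = 0) → a = 0) ∧
    (∀ b : B, (∀ a : A, p.σ a b = 0) → b = 0) := by
  -- product rules for the pairing against single generators
  have hφmul : ∀ (j : Fin n) (a a' : A), p.σ (a * a') (y j)
      = Coalgebra.counit (R := k) a * p.σ a' (y j) + p.σ a (y j) * p.σ a' h := by
    intro j a a'
    rw [p.pair_mul_left, hcy j]
    simp only [map_add, TensorProduct.map_tmul, LinearMap.mul'_apply, LinearMap.add_apply,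
      p.pair_one_right]
    ring
  have hφ'mul : ∀ (j : Fin n) (b b' : B), p.σ (x j) (b * b')
      = p.σ (x j) b * p.σ g b' + Coalgebra.counit (R := k) b * p.σ (x j) b' := by
    intro j b b'
    rw [p.pair_mul_right, hcx j]
    simp only [map_add, TensorProduct.map_tmul, LinearMap.mul'_apply, LinearMap.add_apply,
      LinearMap.flip_apply, p.pair_one_left]
  -- values of the cap operators on generators
  have hD1 : ∀ j : Fin n, capR p.σ (y j) (1 : A) = 0 := by
    intro j
    rw [capR_apply, Bialgebra.comul_one, Algebra.TensorProduct.one_def, capFunR_tmul,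
      p.pair_one_left, hey]
    simp
  have hDg : ∀ j : Fin n, capR p.σ (y j) g = 0 := by
    intro j
    rw [capR_apply, hcg, capFunR_tmul, hσgy]
    simp
  have hE1 : ∀ j : Fin n, capL p.σ (x j) (1 : B) = 0 := by
    intro j
    rw [capL_apply, Bialgebra.comul_one, Algebra.TensorProduct.one_def, capFunL_tmul,
      p.pair_one_right, hex]
    simp
  have hEh : ∀ j : Fin n, capL p.σ (x j) h = 0 := by
    intro j
    rw [capL_apply, hch, capFunL_tmul, hσxh]
    simp
  -- twisted Leibniz rules
  have hDmul : ∀ (j i : Fin n) (u : A), capR p.σ (y j) (u * x i)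
      = (if i = j then (1 : k) else 0) • u - capR p.σ (y j) u * x i := by
    intro j i u
    rw [capR_apply, Bialgebra.comul_mul, hcx i, mul_add, map_add]
    have h1 : ∀ t : A ⊗[k] A,
        capFunR p.σ (y j) (t * (x i ⊗ₜ[k] g)) = -(capFunR p.σ (y j) t * x i) := by
      intro t
      induction t using TensorProduct.induction_on with
      | zero => simp
      | tmul a₁ a₂ =>
          rw [Algebra.TensorProduct.tmul_mul_tmul, capFunR_tmul, capFunR_tmul,
            hφmul j a₂ g, hσgy, hσgh]
          rw [mul_zero, zero_add, mul_neg_one, neg_smul, smul_mul_assoc]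
      | add t₁ t₂ h₁ h₂ =>
          simp only [add_mul, map_add, h₁, h₂, neg_add, smul_add]
          all_goals abel
    have h2 : ∀ t : A ⊗[k] A,
        capFunR p.σ (y j) (t * ((1 : A) ⊗ₜ[k] x i))
          = (if i = j then (1 : k) else 0) • ecapA k A t := by
      intro t
      induction t using TensorProduct.induction_on with
      | zero => simp
      | tmul a₁ a₂ =>
          rw [Algebra.TensorProduct.tmul_mul_tmul, capFunR_tmul,
            hφmul j a₂ (x i), hσxy i j, hσxh, mul_zero, add_zero, mul_one, ecapA_tmul,
            smul_smul, mul_comm]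
      | add t₁ t₂ h₁ h₂ =>
          simp only [add_mul, map_add, h₁, h₂, neg_add, smul_add]
          all_goals abel
    rw [h1, h2, ecapA_comul, capR_apply]
    abel
  have hEmul : ∀ (j i : Fin n) (v : B), capL p.σ (x j) (v * y i)
      = (if i = j then (1 : k) else 0) • v - capL p.σ (x j) v * y i := by
    intro j i v
    rw [capL_apply, Bialgebra.comul_mul, hcy i, mul_add, map_add]
    have h1 : ∀ t : B ⊗[k] B,
        capFunL p.σ (x j) (t * (y i ⊗ₜ[k] (1 : B)))
          = (if i = j then (1 : k) else 0) • ecapB k B t := by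
      intro t
      induction t using TensorProduct.induction_on with
      | zero => simp
      | tmul b₁ b₂ =>
          rw [Algebra.TensorProduct.tmul_mul_tmul, capFunL_tmul,
            hφ'mul j b₁ (y i), hσgy, hσxy j i, mul_zero, zero_add, mul_one, ecapB_tmul,
            smul_smul]
          have hswap : (if j = i then (1:k) else 0) = if i = j then (1:k) else 0 := by
            by_cases hji : j = i
            · simp [hji]
            · rw [if_neg hji, if_neg (fun hh => hji hh.symm)]
          rw [hswap, mul_comm]
      | add t₁ t₂ h₁ h₂ =>
          simp only [add_mul, map_add, h₁, h₂, neg_add, smul_add]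
          all_goals abel
    have h2 : ∀ t : B ⊗[k] B,
        capFunL p.σ (x j) (t * (h ⊗ₜ[k] y i)) = -(capFunL p.σ (x j) t * y i) := by
      intro t
      induction t using TensorProduct.induction_on with
      | zero => simp
      | tmul b₁ b₂ =>
          rw [Algebra.TensorProduct.tmul_mul_tmul, capFunL_tmul, capFunL_tmul,
            hφ'mul j b₁ h, hσgh, hσxh, mul_zero, add_zero, mul_neg_one, neg_smul,
            smul_mul_assoc]
      | add t₁ t₂ h₁ h₂ =>
          simp only [add_mul, map_add, h₁, h₂, neg_add, smul_add]
          all_goals abel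
    rw [h1, h2, ecapB_comul, capL_apply]
    abel
  -- cap operators kill products not containing the index
  have hDlist : ∀ (j : Fin n) (L : List (Fin n)) (u : A), j ∉ L → capR p.σ (y j) u = 0 →
      capR p.σ (y j) (u * (L.map x).prod) = 0 := by
    intro j L
    induction L with
    | nil => intro u _ hu; simpa using hu
    | cons i L ihL =>
        intro u hj hu
        rw [List.mem_cons, not_or] at hj
        rw [List.map_cons, List.prod_cons, ← mul_assoc]
        refine ihL (u * x i) hj.2 ?_
        rw [hDmul, hu, if_neg (fun hh => hj.1 hh.symm), zero_smul, zero_mul, sub_zero]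
  have hElist : ∀ (j : Fin n) (L : List (Fin n)) (v : B), j ∉ L → capL p.σ (x j) v = 0 →
      capL p.σ (x j) (v * (L.map y).prod) = 0 := by
    intro j L
    induction L with
    | nil => intro v _ hv; simpa using hv
    | cons i L ihL =>
        intro v hj hv
        rw [List.mem_cons, not_or] at hj
        rw [List.map_cons, List.prod_cons, ← mul_assoc]
        refine ihL (v * y i) hj.2 ?_
        rw [hEmul, hv, if_neg (fun hh => hj.1 hh.symm), zero_smul, zero_mul, sub_zero]
  -- base values
  have base : ∀ kk ll : Bool, p.σ (if kk then g else 1) (if ll then h else 1)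
      = if kk ∧ ll then (-1 : k) else 1 := by
    intro kk ll
    cases kk <;> cases ll <;>
      simp [p.pair_one_right, p.pair_one_left, heg, heh, hσgh]
  -- the key computation
  have key : ∀ (N : ℕ) (S T : Finset (Fin n)) (kk ll : Bool), S.card + T.card ≤ N →
      p.σ ((if kk then g else 1) * ((S.sort (· ≤ ·)).map x).prod)
          ((if ll then h else 1) * ((T.sort (· ≤ ·)).map y).prod)
        = if S = T then (if kk ∧ ll then (-1 : k) else 1) else 0 := by
    intro N
    induction N with
    | zero =>
        intro S T kk ll hcard
        have hS : S = ∅ := Finset.card_eq_zero.mp (by omega)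
        have hT : T = ∅ := Finset.card_eq_zero.mp (by omega)
        subst hS; subst hT
        simpa [Finset.sort_empty] using base kk ll
    | succ N ih =>
        intro S T kk ll hcard
        by_cases hES : S = ∅ ∧ T = ∅
        · obtain ⟨h1, h2⟩ := hES
          subst h1; subst h2
          simpa [Finset.sort_empty] using base kk ll
        · have hne : (S ∪ T).Nonempty :=
            Finset.nonempty_iff_ne_empty.mpr fun hc => hES (Finset.union_eq_empty.mp hc)
          obtain ⟨j, hjmem, hjle⟩ : ∃ j, j ∈ S ∪ T ∧ ∀ i ∈ S ∪ T, i ≤ j :=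
            ⟨(S ∪ T).max' hne, (S ∪ T).max'_mem hne, fun i hi => (S ∪ T).le_max' i hi⟩
          by_cases hjT : j ∈ T
          · have hsT : T.sort (· ≤ ·) = (T.erase j).sort (· ≤ ·) ++ [j] :=
              sort_eq_erase_append hjT (fun i hi => hjle i (Finset.mem_union_right _ hi))
            rw [hsT, List.map_append, List.prod_append, List.map_singleton,
              List.prod_singleton, ← mul_assoc, pair_capR]
            by_cases hjS : j ∈ S
            · have hsS : S.sort (· ≤ ·) = (S.erase j).sort (· ≤ ·) ++ [j] :=
                sort_eq_erase_append hjS (fun i hi => hjle i (Finset.mem_union_left _ hi))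
              have hD : capR p.σ (y j)
                  ((if kk then g else 1) * ((S.sort (· ≤ ·)).map x).prod)
                  = (if kk then g else 1) * (((S.erase j).sort (· ≤ ·)).map x).prod := by
                rw [hsS, List.map_append, List.prod_append, List.map_singleton,
                  List.prod_singleton, ← mul_assoc, hDmul]
                have hnot : capR p.σ (y j)
                    ((if kk then g else 1) * (((S.erase j).sort (· ≤ ·)).map x).prod) = 0 := by
                  refine hDlist j _ _
                    (fun hc => Finset.notMem_erase j S ((Finset.mem_sort _).mp hc)) ?_
                  cases kk
                  · simpa using hD1 j
                  · simpa using hDg j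
                rw [hnot, if_pos rfl, one_smul, zero_mul, sub_zero]
              rw [hD]
              have hcards : (S.erase j).card + (T.erase j).card ≤ N := by
                rw [Finset.card_erase_of_mem hjS, Finset.card_erase_of_mem hjT]
                have c1 : 1 ≤ S.card := Finset.card_pos.mpr ⟨j, hjS⟩
                have c2 : 1 ≤ T.card := Finset.card_pos.mpr ⟨j, hjT⟩
                omega
              rw [ih _ _ kk ll hcards]
              have hiff : (S.erase j = T.erase j) ↔ (S = T) := by
                constructor
                · intro hh
                  rw [← Finset.insert_erase hjS, ← Finset.insert_erase hjT, hh]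
                · intro hh; rw [hh]
              exact if_congr hiff rfl rfl
            · have hD0 : capR p.σ (y j)
                  ((if kk then g else 1) * ((S.sort (· ≤ ·)).map x).prod) = 0 := by
                refine hDlist j _ _ (fun hc => hjS ((Finset.mem_sort _).mp hc)) ?_
                cases kk
                · simpa using hD1 j
                · simpa using hDg j
              rw [hD0, map_zero, LinearMap.zero_apply,
                if_neg (fun hh : S = T => hjS (by rw [hh]; exact hjT))]
          · have hjS : j ∈ S := by
              rcases Finset.mem_union.mp hjmem with hh | hh
              · exact hh
              · exact absurd hh hjT
            have hsS : S.sort (· ≤ ·) = (S.erase j).sort (· ≤ ·) ++ [j] :=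
              sort_eq_erase_append hjS (fun i hi => hjle i (Finset.mem_union_left _ hi))
            rw [hsS, List.map_append, List.prod_append, List.map_singleton,
              List.prod_singleton, ← mul_assoc, pair_capL]
            have hE0 : capL p.σ (x j)
                ((if ll then h else 1) * ((T.sort (· ≤ ·)).map y).prod) = 0 := by
              refine hElist j _ _ (fun hc => hjT ((Finset.mem_sort _).mp hc)) ?_
              cases ll
              · simpa using hE1 j
              · simpa using hEh j
            rw [hE0, map_zero, if_neg (fun hh : S = T => hjT (by rw [← hh]; exact hjS))]
  have matval : ∀ q q' : Bool × Finset (Fin n),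
      p.σ (bA q) (bB q') = if q.2 = q'.2 then (if q.1 ∧ q'.1 then (-1 : k) else 1) else 0 := by
    intro q q'
    rw [hbA, hbB]
    exact key (q.2.card + q'.2.card) q.2 q'.2 q.1 q'.1 le_rfl
  refine ⟨fun kk ll S T => key (S.card + T.card) S T kk ll le_rfl, ?_, ?_⟩
  · intro a ha
    have expand : ∀ (l : Bool) (T : Finset (Fin n)),
        p.σ a (bB (l, T)) = ∑ q ∈ (bA.repr a).support,
          bA.repr a q * (if q.2 = T then (if q.1 ∧ l then (-1 : k) else 1) else 0) := by
      intro l T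
      conv_lhs => rw [← bA.linearCombination_repr a]
      rw [Finsupp.linearCombination_apply, Finsupp.sum, map_sum, LinearMap.sum_apply]
      refine Finset.sum_congr rfl fun q _ => ?_
      rw [map_smul, LinearMap.smul_apply, matval q (l, T), smul_eq_mul]
    have hc : ∀ q : Bool × Finset (Fin n), bA.repr a q = 0 := by
      rintro ⟨kk, T⟩
      have e1 := (expand false T).symm.trans (ha (bB (false, T)))
      have e2 := (expand true T).symm.trans (ha (bB (true, T)))
      cases kk
      · have e3 : (∑ q ∈ (bA.repr a).support,
            (bA.repr a q * (if q.2 = T then (if q.1 ∧ (false : Bool) then (-1 : k) else 1) else 0)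
              + bA.repr a q *
                (if q.2 = T then (if q.1 ∧ (true : Bool) then (-1 : k) else 1) else 0))) = 0 := by
          rw [Finset.sum_add_distrib, e1, e2, add_zero]
        have e4 : ∀ q ∈ (bA.repr a).support,
            (bA.repr a q * (if q.2 = T then (if q.1 ∧ (false : Bool) then (-1 : k) else 1) else 0)
              + bA.repr a q *
                (if q.2 = T then (if q.1 ∧ (true : Bool) then (-1 : k) else 1) else 0))
            = if q = ((false : Bool), T) then 2 * bA.repr a q else 0 := by
          rintro ⟨kq, Sq⟩ _
          by_cases hSq : Sq = T
          · subst hSq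
            cases kq
            · simp only [if_pos rfl]
              norm_num
              ring
            · simp only [if_pos rfl]
              norm_num
          · simp [hSq, Prod.ext_iff]
        rw [Finset.sum_congr rfl e4,
          Finset.sum_ite_eq' _ ((false : Bool), T) (fun q => 2 * bA.repr a q)] at e3
        by_cases hmem : ((false : Bool), T) ∈ (bA.repr a).support
        · rw [if_pos hmem] at e3
          rcases mul_eq_zero.mp e3 with h0 | h0
          · exact absurd h0 htwo
          · exact h0
        · exact Finsupp.notMem_support_iff.mp hmem
      · have e3 : (∑ q ∈ (bA.repr a).support,
            (bA.repr a q * (if q.2 = T then (if q.1 ∧ (false : Bool) then (-1 : k) else 1) else 0)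
              - bA.repr a q *
                (if q.2 = T then (if q.1 ∧ (true : Bool) then (-1 : k) else 1) else 0))) = 0 := by
          rw [Finset.sum_sub_distrib, e1, e2, sub_zero]
        have e4 : ∀ q ∈ (bA.repr a).support,
            (bA.repr a q * (if q.2 = T then (if q.1 ∧ (false : Bool) then (-1 : k) else 1) else 0)
              - bA.repr a q *
                (if q.2 = T then (if q.1 ∧ (true : Bool) then (-1 : k) else 1) else 0))
            = if q = ((true : Bool), T) then 2 * bA.repr a q else 0 := by
          rintro ⟨kq, Sq⟩ _
          by_cases hSq : Sq = T
          · subst hSq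
            cases kq
            · simp only [if_pos rfl]
              norm_num
            · simp only [if_pos rfl]
              norm_num
              ring
          · simp [hSq, Prod.ext_iff]
        rw [Finset.sum_congr rfl e4,
          Finset.sum_ite_eq' _ ((true : Bool), T) (fun q => 2 * bA.repr a q)] at e3
        by_cases hmem : ((true : Bool), T) ∈ (bA.repr a).support
        · rw [if_pos hmem] at e3
          rcases mul_eq_zero.mp e3 with h0 | h0
          · exact absurd h0 htwo
          · exact h0
        · exact Finsupp.notMem_support_iff.mp hmem
    have hrepr : bA.repr a = 0 := Finsupp.ext hc
    rw [← bA.linearCombination_repr a, hrepr, map_zero]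
  · intro b hb
    have expand : ∀ (l : Bool) (S : Finset (Fin n)),
        p.σ (bA (l, S)) b = ∑ q ∈ (bB.repr b).support,
          bB.repr b q * (if S = q.2 then (if l ∧ q.1 then (-1 : k) else 1) else 0) := by
      intro l S
      conv_lhs => rw [← bB.linearCombination_repr b]
      rw [Finsupp.linearCombination_apply, Finsupp.sum, map_sum]
      refine Finset.sum_congr rfl fun q _ => ?_
      rw [map_smul, matval (l, S) q, smul_eq_mul]
    have hc : ∀ q : Bool × Finset (Fin n), bB.repr b q = 0 := by
      rintro ⟨kk, T⟩
      have e1 := (expand false T).symm.trans (hb (bA (false, T)))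
      have e2 := (expand true T).symm.trans (hb (bA (true, T)))
      cases kk
      · have e3 : (∑ q ∈ (bB.repr b).support,
            (bB.repr b q * (if T = q.2 then (if (false : Bool) ∧ q.1 then (-1 : k) else 1) else 0)
              + bB.repr b q *
                (if T = q.2 then (if (true : Bool) ∧ q.1 then (-1 : k) else 1) else 0))) = 0 := by
          rw [Finset.sum_add_distrib, e1, e2, add_zero]
        have e4 : ∀ q ∈ (bB.repr b).support,
            (bB.repr b q * (if T = q.2 then (if (false : Bool) ∧ q.1 then (-1 : k) else 1) else 0)
              + bB.repr b q *
                (if T = q.2 then (if (true : Bool) ∧ q.1 then (-1 : k) else 1) else 0))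
            = if q = ((false : Bool), T) then 2 * bB.repr b q else 0 := by
          rintro ⟨kq, Sq⟩ _
          by_cases hSq : T = Sq
          · subst hSq
            cases kq
            · simp only [if_pos rfl]
              norm_num
              ring
            · simp only [if_pos rfl]
              norm_num
          · have hSq' : ¬ Sq = T := fun hh => hSq hh.symm
            simp [hSq, hSq', Prod.ext_iff]
        rw [Finset.sum_congr rfl e4,
          Finset.sum_ite_eq' _ ((false : Bool), T) (fun q => 2 * bB.repr b q)] at e3
        by_cases hmem : ((false : Bool), T) ∈ (bB.repr b).support
        · rw [if_pos hmem] at e3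
          rcases mul_eq_zero.mp e3 with h0 | h0
          · exact absurd h0 htwo
          · exact h0
        · exact Finsupp.notMem_support_iff.mp hmem
      · have e3 : (∑ q ∈ (bB.repr b).support,
            (bB.repr b q * (if T = q.2 then (if (false : Bool) ∧ q.1 then (-1 : k) else 1) else 0)
              - bB.repr b q *
                (if T = q.2 then (if (true : Bool) ∧ q.1 then (-1 : k) else 1) else 0))) = 0 := by
          rw [Finset.sum_sub_distrib, e1, e2, sub_zero]
        have e4 : ∀ q ∈ (bB.repr b).support,
            (bB.repr b q * (if T = q.2 then (if (false : Bool) ∧ q.1 then (-1 : k) else 1) else 0)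
              - bB.repr b q *
                (if T = q.2 then (if (true : Bool) ∧ q.1 then (-1 : k) else 1) else 0))
            = if q = ((true : Bool), T) then 2 * bB.repr b q else 0 := by
          rintro ⟨kq, Sq⟩ _
          by_cases hSq : T = Sq
          · subst hSq
            cases kq
            · simp only [if_pos rfl]
              norm_num
            · simp only [if_pos rfl]
              norm_num
              ring
          · have hSq' : ¬ Sq = T := fun hh => hSq hh.symm
            simp [hSq, hSq', Prod.ext_iff]
        rw [Finset.sum_congr rfl e4,
          Finset.sum_ite_eq' _ ((true : Bool), T) (fun q => 2 * bB.repr b q)] at e3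
        by_cases hmem : ((true : Bool), T) ∈ (bB.repr b).support
        · rw [if_pos hmem] at e3
          rcases mul_eq_zero.mp e3 with h0 | h0
          · exact absurd h0 htwo
          · exact h0
        · exact Finsupp.notMem_support_iff.mp hmem
    have hrepr : bB.repr b = 0 := Finsupp.ext hc
    rw [← bB.linearCombination_repr b, hrepr, map_zero]
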